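/- Let Ṽ, X̃, W, Z be independent zero-mean Gaussians with variances Q', βP, N', N, let g ≥ 0, Y = (1+g)Ṽ + X̃ + W + Z and U = X̃ + α(1+g)Ṽ. Then I(U;Y) − I(U;Ṽ) = (1/2)log[ βP(βP + (1+g)²Q' + N' + N) / ((N'+N)(βP + α²(1+g)²Q') + (1−α)²β(1+g)²PQ') ]. -/

import Mathlib

open MeasureTheory ProbabilityTheory

lemma l2_mul_int {Ω : Type*} [MeasureSpace Ω] {f g : Ω → ℝ}
    (hf : MemLp f 2 (ℙ : Measure Ω)) (hg : MemLp g 2 (ℙ : Measure Ω)) :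
    Integrable (fun ω => f ω * g ω) (ℙ : Measure Ω) := by
  refine Integrable.mono' ((hf.integrable_sq.add hg.integrable_sq).const_mul (1/2))
    (hf.aestronglyMeasurable.mul hg.aestronglyMeasurable) ?_
  filter_upwards with ω
  have : |f ω| * |g ω| ≤ (1/2) * (f ω ^ 2 + g ω ^ 2) := by
    nlinarith [sq_nonneg (|f ω| - |g ω|), sq_abs (f ω), sq_abs (g ω)]
  simpa [Real.norm_eq_abs, abs_mul] using this

set_option maxHeartbeats 2000000 in
theorem stmt10 {Ω : Type*} [MeasureSpace Ω] [IsProbabilityMeasure (ℙ : Measure Ω)]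
    (Q' N' N P β α g : ℝ) (hQ : 0 < Q') (hN' : 0 < N') (hN : 0 < N) (hP : 0 < P)
    (hβ : 0 < β) (hβ1 : β ≤ 1) (hg : 0 ≤ g)
    (Vt Xt W Z : Ω → ℝ)
    (hVt2 : MemLp Vt 2 (ℙ : Measure Ω)) (hXt2 : MemLp Xt 2 (ℙ : Measure Ω)) (hW2 : MemLp W 2 (ℙ : Measure Ω)) (hZ2 : MemLp Z 2 (ℙ : Measure Ω))
    (hVtm : ∫ ω, Vt ω = 0) (hXtm : ∫ ω, Xt ω = 0) (hWm : ∫ ω, W ω = 0) (hZm : ∫ ω, Z ω = 0)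
    (hVtv : ∫ ω, (Vt ω) ^ 2 = Q') (hXtv : ∫ ω, (Xt ω) ^ 2 = β * P)
    (hWv : ∫ ω, (W ω) ^ 2 = N') (hZv : ∫ ω, (Z ω) ^ 2 = N)
    (h12 : ∫ ω, Vt ω * Xt ω = 0) (h13 : ∫ ω, Vt ω * W ω = 0) (h14 : ∫ ω, Vt ω * Z ω = 0)
    (h23 : ∫ ω, Xt ω * W ω = 0) (h24 : ∫ ω, Xt ω * Z ω = 0) (h34 : ∫ ω, W ω * Z ω = 0)
    (Y U : Ω → ℝ)
    (hY : Y = fun ω => (1 + g) * Vt ω + Xt ω + W ω + Z ω)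
    (hU : U = fun ω => Xt ω + α * (1 + g) * Vt ω) :
    -- I(U;Y) - I(U;Ṽ), each mutual information computed by the Gaussian formula
    -- I(A;B) = (1/2) log( Var A · Var B / (Var A · Var B − Cov(A,B)²) )
    (1 / 2) * Real.log ((∫ ω, (U ω) ^ 2) * (∫ ω, (Y ω) ^ 2) /
        ((∫ ω, (U ω) ^ 2) * (∫ ω, (Y ω) ^ 2) - (∫ ω, U ω * Y ω) ^ 2)) -
      (1 / 2) * Real.log ((∫ ω, (U ω) ^ 2) * (∫ ω, (Vt ω) ^ 2) /
        ((∫ ω, (U ω) ^ 2) * (∫ ω, (Vt ω) ^ 2) - (∫ ω, U ω * Vt ω) ^ 2)) =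
    (1 / 2) * Real.log (β * P * (β * P + (1 + g) ^ 2 * Q' + N' + N) /
      ((N' + N) * (β * P + α ^ 2 * (1 + g) ^ 2 * Q') +
        (1 - α) ^ 2 * β * (1 + g) ^ 2 * P * Q')) := by
  subst hY hU
  -- integrability of all basic products
  have iVV := l2_mul_int hVt2 hVt2
  have iVX := l2_mul_int hVt2 hXt2
  have iVW := l2_mul_int hVt2 hW2
  have iVZ := l2_mul_int hVt2 hZ2
  have iXX := l2_mul_int hXt2 hXt2
  have iXW := l2_mul_int hXt2 hW2
  have iXZ := l2_mul_int hXt2 hZ2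
  have iWW := l2_mul_int hW2 hW2
  have iWZ := l2_mul_int hW2 hZ2
  have iZZ := l2_mul_int hZ2 hZ2
  -- second moments as products
  have hVV : ∫ ω, Vt ω * Vt ω = Q' := by simp only [← pow_two]; exact hVtv
  have hXX : ∫ ω, Xt ω * Xt ω = β * P := by simp only [← pow_two]; exact hXtv
  have hWW : ∫ ω, W ω * W ω = N' := by simp only [← pow_two]; exact hWv
  have hZZ : ∫ ω, Z ω * Z ω = N := by simp only [← pow_two]; exact hZv
  -- ∫ U²
  have hU2 : ∫ ω, (Xt ω + α * (1 + g) * Vt ω) ^ 2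
      = β * P + α ^ 2 * (1 + g) ^ 2 * Q' := by
    have e : ∀ ω : Ω, (Xt ω + α * (1 + g) * Vt ω) ^ 2
        = Xt ω * Xt ω + ((2 * (α * (1 + g))) * (Vt ω * Xt ω)
          + (α ^ 2 * (1 + g) ^ 2) * (Vt ω * Vt ω)) := fun ω => by ring
    simp_rw [e]
    have s2 : Integrable (fun ω => (2 * (α * (1 + g))) * (Vt ω * Xt ω)
        + (α ^ 2 * (1 + g) ^ 2) * (Vt ω * Vt ω)) ℙ :=
      (iVX.const_mul _).add (iVV.const_mul _)
    rw [integral_add iXX s2,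
      integral_add (iVX.const_mul _) (iVV.const_mul _),
      integral_const_mul, integral_const_mul, hXX, h12, hVV]
    ring
  -- ∫ Y²
  have hY2 : ∫ ω, ((1 + g) * Vt ω + Xt ω + W ω + Z ω) ^ 2
      = (1 + g) ^ 2 * Q' + β * P + N' + N := by
    have e : ∀ ω : Ω, ((1 + g) * Vt ω + Xt ω + W ω + Z ω) ^ 2
        = (1 + g) ^ 2 * (Vt ω * Vt ω) + (Xt ω * Xt ω + (W ω * W ω + (Z ω * Z ω
          + ((2 * (1 + g)) * (Vt ω * Xt ω) + ((2 * (1 + g)) * (Vt ω * W ω)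
          + ((2 * (1 + g)) * (Vt ω * Z ω) + (2 * (Xt ω * W ω)
          + (2 * (Xt ω * Z ω) + 2 * (W ω * Z ω))))))))) := fun ω => by ring
    simp_rw [e]
    have s9 : Integrable (fun ω => 2 * (Xt ω * Z ω) + 2 * (W ω * Z ω)) ℙ :=
      (iXZ.const_mul 2).add (iWZ.const_mul 2)
    have s8 : Integrable (fun ω => 2 * (Xt ω * W ω) + (2 * (Xt ω * Z ω) + 2 * (W ω * Z ω))) ℙ :=
      (iXW.const_mul 2).add s9
    have s7 : Integrable (fun ω => (2 * (1 + g)) * (Vt ω * Z ω)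
        + (2 * (Xt ω * W ω) + (2 * (Xt ω * Z ω) + 2 * (W ω * Z ω)))) ℙ :=
      (iVZ.const_mul _).add s8
    have s6 : Integrable (fun ω => (2 * (1 + g)) * (Vt ω * W ω) + ((2 * (1 + g)) * (Vt ω * Z ω)
        + (2 * (Xt ω * W ω) + (2 * (Xt ω * Z ω) + 2 * (W ω * Z ω))))) ℙ :=
      (iVW.const_mul _).add s7
    have s5 : Integrable (fun ω => (2 * (1 + g)) * (Vt ω * Xt ω) + ((2 * (1 + g)) * (Vt ω * W ω)
        + ((2 * (1 + g)) * (Vt ω * Z ω)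
        + (2 * (Xt ω * W ω) + (2 * (Xt ω * Z ω) + 2 * (W ω * Z ω)))))) ℙ :=
      (iVX.const_mul _).add s6
    have s4 : Integrable (fun ω => Z ω * Z ω + ((2 * (1 + g)) * (Vt ω * Xt ω)
        + ((2 * (1 + g)) * (Vt ω * W ω) + ((2 * (1 + g)) * (Vt ω * Z ω)
        + (2 * (Xt ω * W ω) + (2 * (Xt ω * Z ω) + 2 * (W ω * Z ω))))))) ℙ := iZZ.add s5
    have s3 : Integrable (fun ω => W ω * W ω + (Z ω * Z ω + ((2 * (1 + g)) * (Vt ω * Xt ω)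
        + ((2 * (1 + g)) * (Vt ω * W ω) + ((2 * (1 + g)) * (Vt ω * Z ω)
        + (2 * (Xt ω * W ω) + (2 * (Xt ω * Z ω) + 2 * (W ω * Z ω)))))))) ℙ := iWW.add s4
    have s2 : Integrable (fun ω => Xt ω * Xt ω + (W ω * W ω + (Z ω * Z ω
        + ((2 * (1 + g)) * (Vt ω * Xt ω) + ((2 * (1 + g)) * (Vt ω * W ω)
        + ((2 * (1 + g)) * (Vt ω * Z ω)
        + (2 * (Xt ω * W ω) + (2 * (Xt ω * Z ω) + 2 * (W ω * Z ω))))))))) ℙ := iXX.add s3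
    rw [integral_add (iVV.const_mul _) s2, integral_add iXX s3,
      integral_add iWW s4, integral_add iZZ s5,
      integral_add (iVX.const_mul _) s6, integral_add (iVW.const_mul _) s7,
      integral_add (iVZ.const_mul _) s8, integral_add (iXW.const_mul _) s9,
      integral_add (iXZ.const_mul _) (iWZ.const_mul _)]
    simp only [integral_const_mul]
    rw [hVV, hXX, hWW, hZZ, h12, h13, h14, h23, h24, h34]
    ring
  -- ∫ U·Y
  have hUY : ∫ ω, (Xt ω + α * (1 + g) * Vt ω) * ((1 + g) * Vt ω + Xt ω + W ω + Z ω)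
      = β * P + α * (1 + g) ^ 2 * Q' := by
    have e : ∀ ω : Ω, (Xt ω + α * (1 + g) * Vt ω) * ((1 + g) * Vt ω + Xt ω + W ω + Z ω)
        = Xt ω * Xt ω + (((1 + g) + α * (1 + g)) * (Vt ω * Xt ω)
          + ((α * (1 + g) ^ 2) * (Vt ω * Vt ω) + (Xt ω * W ω + (Xt ω * Z ω
          + ((α * (1 + g)) * (Vt ω * W ω) + (α * (1 + g)) * (Vt ω * Z ω)))))) :=
      fun ω => by ring
    simp_rw [e]
    have s6 : Integrable (fun ω => (α * (1 + g)) * (Vt ω * W ω)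
        + (α * (1 + g)) * (Vt ω * Z ω)) ℙ := (iVW.const_mul _).add (iVZ.const_mul _)
    have s5 : Integrable (fun ω => Xt ω * Z ω + ((α * (1 + g)) * (Vt ω * W ω)
        + (α * (1 + g)) * (Vt ω * Z ω))) ℙ := iXZ.add s6
    have s4 : Integrable (fun ω => Xt ω * W ω + (Xt ω * Z ω + ((α * (1 + g)) * (Vt ω * W ω)
        + (α * (1 + g)) * (Vt ω * Z ω)))) ℙ := iXW.add s5
    have s3 : Integrable (fun ω => (α * (1 + g) ^ 2) * (Vt ω * Vt ω) + (Xt ω * W ω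
        + (Xt ω * Z ω + ((α * (1 + g)) * (Vt ω * W ω)
        + (α * (1 + g)) * (Vt ω * Z ω))))) ℙ := (iVV.const_mul _).add s4
    have s2 : Integrable (fun ω => ((1 + g) + α * (1 + g)) * (Vt ω * Xt ω)
        + ((α * (1 + g) ^ 2) * (Vt ω * Vt ω) + (Xt ω * W ω
        + (Xt ω * Z ω + ((α * (1 + g)) * (Vt ω * W ω)
        + (α * (1 + g)) * (Vt ω * Z ω)))))) ℙ := (iVX.const_mul _).add s3
    rw [integral_add iXX s2, integral_add (iVX.const_mul _) s3,
      integral_add (iVV.const_mul _) s4, integral_add iXW s5,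
      integral_add iXZ s6, integral_add (iVW.const_mul _) (iVZ.const_mul _)]
    simp only [integral_const_mul]
    rw [hVV, hXX, h12, h13, h14, h23, h24]
    ring
  -- ∫ U·V
  have hUV : ∫ ω, (Xt ω + α * (1 + g) * Vt ω) * Vt ω = α * (1 + g) * Q' := by
    have e : ∀ ω : Ω, (Xt ω + α * (1 + g) * Vt ω) * Vt ω
        = Vt ω * Xt ω + (α * (1 + g)) * (Vt ω * Vt ω) := fun ω => by ring
    simp_rw [e]
    rw [integral_add iVX (iVV.const_mul _), integral_const_mul, h12, hVV]
    ring
  rw [hU2, hY2, hUY, hUV, hVtv]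
  -- positivity facts
  have hQn : (0:ℝ) ≤ (1 + g) ^ 2 * Q' := mul_nonneg (sq_nonneg _) hQ.le
  have hαn : (0:ℝ) ≤ α ^ 2 * (1 + g) ^ 2 * Q' :=
    mul_nonneg (mul_nonneg (sq_nonneg _) (sq_nonneg _)) hQ.le
  have hBP : 0 < β * P := mul_pos hβ hP
  have pU : 0 < β * P + α ^ 2 * (1 + g) ^ 2 * Q' := by linarith
  have pY : 0 < (1 + g) ^ 2 * Q' + β * P + N' + N := by linarith
  have key1 : (β * P + α ^ 2 * (1 + g) ^ 2 * Q') * ((1 + g) ^ 2 * Q' + β * P + N' + N)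
      - (β * P + α * (1 + g) ^ 2 * Q') ^ 2
      = (N' + N) * (β * P + α ^ 2 * (1 + g) ^ 2 * Q')
        + (1 - α) ^ 2 * β * (1 + g) ^ 2 * P * Q' := by ring
  have h2n : (0:ℝ) ≤ (1 - α) ^ 2 * β * (1 + g) ^ 2 * P * Q' :=
    mul_nonneg (mul_nonneg (mul_nonneg (mul_nonneg (sq_nonneg _) hβ.le) (sq_nonneg _)) hP.le) hQ.le
  have pDen : 0 < (N' + N) * (β * P + α ^ 2 * (1 + g) ^ 2 * Q')
      + (1 - α) ^ 2 * β * (1 + g) ^ 2 * P * Q' := by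
    have : 0 < (N' + N) * (β * P + α ^ 2 * (1 + g) ^ 2 * Q') :=
      mul_pos (by linarith) pU
    linarith
  have pD1 : 0 < (β * P + α ^ 2 * (1 + g) ^ 2 * Q') * ((1 + g) ^ 2 * Q' + β * P + N' + N)
      - (β * P + α * (1 + g) ^ 2 * Q') ^ 2 := by rw [key1]; exact pDen
  have key2 : (β * P + α ^ 2 * (1 + g) ^ 2 * Q') * Q' - (α * (1 + g) * Q') ^ 2
      = β * P * Q' := by ring
  have pD2 : 0 < (β * P + α ^ 2 * (1 + g) ^ 2 * Q') * Q' - (α * (1 + g) * Q') ^ 2 := by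
    rw [key2]; exact mul_pos hBP hQ
  have pA : 0 < (β * P + α ^ 2 * (1 + g) ^ 2 * Q') * ((1 + g) ^ 2 * Q' + β * P + N' + N)
      / ((β * P + α ^ 2 * (1 + g) ^ 2 * Q') * ((1 + g) ^ 2 * Q' + β * P + N' + N)
        - (β * P + α * (1 + g) ^ 2 * Q') ^ 2) := div_pos (mul_pos pU pY) pD1
  have pB : 0 < (β * P + α ^ 2 * (1 + g) ^ 2 * Q') * Q'
      / ((β * P + α ^ 2 * (1 + g) ^ 2 * Q') * Q' - (α * (1 + g) * Q') ^ 2) :=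
    div_pos (mul_pos pU hQ) pD2
  rw [← mul_sub, ← Real.log_div pA.ne' pB.ne']
  congr 1
  rw [key1, key2]
  have d1 : ((N' + N) * (β * P + α ^ 2 * (1 + g) ^ 2 * Q')
      + (1 - α) ^ 2 * β * (1 + g) ^ 2 * P * Q') ≠ 0 := pDen.ne'
  have d2 : β * P * Q' ≠ 0 := (mul_pos hBP hQ).ne'
  have d3 : (β * P + α ^ 2 * (1 + g) ^ 2 * Q') * Q' ≠ 0 := (mul_pos pU hQ).ne'
  congr 1
  rw [div_div_div_comm, div_eq_div_iff (by positivity) (by positivity)]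
  field_simp
  ring
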